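/- Let A, B : ℝ³ → M₃(ℝ) be differentiable symmetric-matrix-valued fields. Then pointwise on ℝ³ one has div[A,B] = ⟨curl A, B⟩ − ⟨A, curl B⟩, where [A,B] denotes the vector field x ↦ [A(x),B(x)]. (This is the flat-space version of the generalized divergence-of-a-vector-product identity of the 1+3 formalism.) -/

import Mathlib

open Matrix BigOperators
open scoped RealInnerProductSpace

noncomputable section

/-- Vectors in ℝ³. -/
abbrev V3 := Fin 3 → ℝ

/-- 3×3 real matrices. -/
abbrev M3 := Matrix (Fin 3) (Fin 3) ℝ

/-- The Levi-Civita symbol on three indices. -/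
def eps (a b c : Fin 3) : ℝ :=
  if (a, b, c) = (0, 1, 2) ∨ (a, b, c) = (1, 2, 0) ∨ (a, b, c) = (2, 0, 1) then 1
  else if (a, b, c) = (0, 2, 1) ∨ (a, b, c) = (2, 1, 0) ∨ (a, b, c) = (1, 0, 2) then -1
  else 0

/-- The Frobenius inner product ⟨A,B⟩ = Σ_{i,j} A_{ij} B_{ij}. -/
def frob (A B : M3) : ℝ := ∑ i, ∑ j, A i j * B i j

/-- The Euclidean inner product on ℝ³. -/
def dot3 (v w : V3) : ℝ := ∑ a, v a * w a

/-- The generalized vector product of two 3×3 matrices: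
    [A,B]_a = Σ_{b,c} ε_{abc} (AB)_{bc}. -/
def mcross (A B : M3) : V3 := fun a => ∑ b, ∑ c, eps a b c * (A * B) b c

/-- v ∧ B : (v∧B)_{ab} = ½ Σ_{c,d} (ε_{acd} v_c B_{db} + ε_{bcd} v_c B_{da}). -/
def vwedge (v : V3) (B : M3) : M3 := fun a b =>
  (1 / 2 : ℝ) * ∑ c, ∑ d, (eps a c d * v c * B d b + eps b c d * v c * B d a)

/-- The tensor product (a⊗ω)_{ij} = a_i ω_j. -/
def tens (a ω : V3) : M3 := fun i j => a i * ω j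

/-- The trace-free symmetric part X^ = ½(X+Xᵀ) − (1/3)(Tr X)·I. -/
def hat (X : M3) : M3 := (1 / 2 : ℝ) • (X + Xᵀ) - ((1 / 3 : ℝ) * X.trace) • (1 : M3)

/-- The partial derivative ∂_c f at x of a scalar field f : ℝ³ → ℝ. -/
def pd (c : Fin 3) (f : V3 → ℝ) (x : V3) : ℝ := fderiv ℝ f x (Pi.single c 1)

/-- The curl of a matrix field:
    (curl A)_{ab} = ½ Σ_{c,d} (ε_{acd} ∂_c A_{db} + ε_{bcd} ∂_c A_{da}). -/
def curlM (A : V3 → M3) (x : V3) : M3 := fun a b =>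
  (1 / 2 : ℝ) * ∑ c, ∑ d,
    (eps a c d * pd c (fun y => A y d b) x + eps b c d * pd c (fun y => A y d a) x)

/-- The divergence of a vector field: div w = Σ_a ∂_a w_a. -/
def divV (w : V3 → V3) (x : V3) : ℝ := ∑ a, pd a (fun y => w y a) x

/-- The divergence of a matrix field: (div A)_b = Σ_a ∂_a A_{ab}. -/
def divM (A : V3 → M3) (x : V3) : V3 := fun b => ∑ a, pd a (fun y => A y a b) x

/-- The Jacobian matrix field (Dw)_{ab} = ∂_a w_b. -/
def jac (w : V3 → V3) (x : V3) : M3 := fun a b => pd a (fun y => w y b) x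

lemma pd_congr (c : Fin 3) (x : V3) {f g : V3 → ℝ} (h : ∀ y, f y = g y) :
    pd c f x = pd c g x := by rw [show f = g from funext h]

lemma pd_sum3 (c : Fin 3) (x : V3) (f : Fin 3 → Fin 3 → Fin 3 → V3 → ℝ)
    (hf : ∀ i j k, DifferentiableAt ℝ (f i j k) x) :
    pd c (fun y => ∑ i, ∑ j, ∑ k, f i j k y) x = ∑ i, ∑ j, ∑ k, pd c (f i j k) x := by
  unfold pd
  rw [fderiv_fun_sum (fun i _ => DifferentiableAt.fun_sum (fun j _ =>
    DifferentiableAt.fun_sum (fun k _ => hf i j k)))]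
  rw [ContinuousLinearMap.sum_apply]
  refine Finset.sum_congr rfl fun i _ => ?_
  rw [fderiv_fun_sum (fun j _ => DifferentiableAt.fun_sum (fun k _ => hf i j k)),
    ContinuousLinearMap.sum_apply]
  refine Finset.sum_congr rfl fun j _ => ?_
  rw [fderiv_fun_sum (fun k _ => hf i j k), ContinuousLinearMap.sum_apply]

lemma pd_cmul_mul (c : Fin 3) (x : V3) (e : ℝ) (f g : V3 → ℝ)
    (hf : DifferentiableAt ℝ f x) (hg : DifferentiableAt ℝ g x) :
    pd c (fun y => e * (f y * g y)) x = e * (pd c f x * g x + f x * pd c g x) := by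
  unfold pd
  rw [fderiv_const_mul (hf.fun_mul hg), fderiv_fun_mul hf hg]
  simp
  ring


lemma eps_000 : eps 0 0 0 = 0 := by rw [eps, if_neg (by decide), if_neg (by decide)]
lemma eps_001 : eps 0 0 1 = 0 := by rw [eps, if_neg (by decide), if_neg (by decide)]
lemma eps_002 : eps 0 0 2 = 0 := by rw [eps, if_neg (by decide), if_neg (by decide)]
lemma eps_010 : eps 0 1 0 = 0 := by rw [eps, if_neg (by decide), if_neg (by decide)]
lemma eps_011 : eps 0 1 1 = 0 := by rw [eps, if_neg (by decide), if_neg (by decide)]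
lemma eps_012 : eps 0 1 2 = 1 := by rw [eps, if_pos (by decide)]
lemma eps_020 : eps 0 2 0 = 0 := by rw [eps, if_neg (by decide), if_neg (by decide)]
lemma eps_021 : eps 0 2 1 = (-1) := by rw [eps, if_neg (by decide), if_pos (by decide)]
lemma eps_022 : eps 0 2 2 = 0 := by rw [eps, if_neg (by decide), if_neg (by decide)]
lemma eps_100 : eps 1 0 0 = 0 := by rw [eps, if_neg (by decide), if_neg (by decide)]
lemma eps_101 : eps 1 0 1 = 0 := by rw [eps, if_neg (by decide), if_neg (by decide)]
lemma eps_102 : eps 1 0 2 = (-1) := by rw [eps, if_neg (by decide), if_pos (by decide)]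
lemma eps_110 : eps 1 1 0 = 0 := by rw [eps, if_neg (by decide), if_neg (by decide)]
lemma eps_111 : eps 1 1 1 = 0 := by rw [eps, if_neg (by decide), if_neg (by decide)]
lemma eps_112 : eps 1 1 2 = 0 := by rw [eps, if_neg (by decide), if_neg (by decide)]
lemma eps_120 : eps 1 2 0 = 1 := by rw [eps, if_pos (by decide)]
lemma eps_121 : eps 1 2 1 = 0 := by rw [eps, if_neg (by decide), if_neg (by decide)]
lemma eps_122 : eps 1 2 2 = 0 := by rw [eps, if_neg (by decide), if_neg (by decide)]
lemma eps_200 : eps 2 0 0 = 0 := by rw [eps, if_neg (by decide), if_neg (by decide)]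
lemma eps_201 : eps 2 0 1 = 1 := by rw [eps, if_pos (by decide)]
lemma eps_202 : eps 2 0 2 = 0 := by rw [eps, if_neg (by decide), if_neg (by decide)]
lemma eps_210 : eps 2 1 0 = (-1) := by rw [eps, if_neg (by decide), if_pos (by decide)]
lemma eps_211 : eps 2 1 1 = 0 := by rw [eps, if_neg (by decide), if_neg (by decide)]
lemma eps_212 : eps 2 1 2 = 0 := by rw [eps, if_neg (by decide), if_neg (by decide)]
lemma eps_220 : eps 2 2 0 = 0 := by rw [eps, if_neg (by decide), if_neg (by decide)]
lemma eps_221 : eps 2 2 1 = 0 := by rw [eps, if_neg (by decide), if_neg (by decide)]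
lemma eps_222 : eps 2 2 2 = 0 := by rw [eps, if_neg (by decide), if_neg (by decide)]

set_option maxHeartbeats 2000000 in
lemma key (P Q : M3) (DP DQ : Fin 3 → M3)
    (hP : ∀ i j : Fin 3, P i j = P j i) (hQ : ∀ i j : Fin 3, Q i j = Q j i)
    (hDP : ∀ c i j : Fin 3, DP c i j = DP c j i)
    (hDQ : ∀ c i j : Fin 3, DQ c i j = DQ c j i) :
    ∑ a, ∑ b, ∑ c, ∑ k, eps a b c * (DP a b k * Q k c + P b k * DQ a k c)
    = (∑ i, ∑ j, ((1/2:ℝ) * ∑ c, ∑ d, (eps i c d * DP c d j + eps j c d * DP c d i)) * Q i j)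
    - ∑ i, ∑ j, P i j * ((1/2:ℝ) * ∑ c, ∑ d, (eps i c d * DQ c d j + eps j c d * DQ c d i)) := by
  simp only [Fin.sum_univ_three, eps_000, eps_001, eps_002, eps_010, eps_011, eps_012, eps_020, eps_021, eps_022, eps_100, eps_101, eps_102, eps_110, eps_111, eps_112, eps_120, eps_121, eps_122, eps_200, eps_201, eps_202, eps_210, eps_211, eps_212, eps_220, eps_221, eps_222, mul_zero, zero_mul, mul_one, one_mul, neg_mul, mul_neg, zero_add, add_zero]
  simp only [hP 1 0, hP 2 0, hP 2 1, hQ 1 0, hQ 2 0, hQ 2 1,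
    hDP 0 1 0, hDP 0 2 0, hDP 0 2 1, hDP 1 1 0, hDP 1 2 0, hDP 1 2 1,
    hDP 2 1 0, hDP 2 2 0, hDP 2 2 1,
    hDQ 0 1 0, hDQ 0 2 0, hDQ 0 2 1, hDQ 1 1 0, hDQ 1 2 0, hDQ 1 2 1,
    hDQ 2 1 0, hDQ 2 2 0, hDQ 2 2 1]
  ring

/-- div[A,B] = ⟨curl A, B⟩ − ⟨A, curl B⟩ for differentiable
    symmetric matrix fields A, B. -/
theorem stmt_2 (A B : V3 → M3)
    (hA : ∀ i j, Differentiable ℝ fun x => A x i j)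
    (hB : ∀ i j, Differentiable ℝ fun x => B x i j)
    (hAsym : ∀ x, (A x)ᵀ = A x) (hBsym : ∀ x, (B x)ᵀ = B x) :
    ∀ x, divV (fun y => mcross (A y) (B y)) x
      = frob (curlM A x) (B x) - frob (A x) (curlM B x) := by
  intro x
  have hAsym' : ∀ (i j : Fin 3) (y : V3), A y i j = A y j i := fun i j y =>
    by conv_lhs => rw [← hAsym y, Matrix.transpose_apply]
  have hBsym' : ∀ (i j : Fin 3) (y : V3), B y i j = B y j i := fun i j y =>
    by conv_lhs => rw [← hBsym y, Matrix.transpose_apply]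
  have hL : divV (fun y => mcross (A y) (B y)) x
      = ∑ a, ∑ b, ∑ c, ∑ k, eps a b c *
          (pd a (fun y => A y b k) x * B x k c + A x b k * pd a (fun y => B y k c) x) := by
    unfold divV
    refine Finset.sum_congr rfl fun a _ => ?_
    rw [pd_congr a x (g := fun y => ∑ b, ∑ c, ∑ k, eps a b c * (A y b k * B y k c))
      (fun y => by simp [mcross, Matrix.mul_apply, Finset.mul_sum])]
    rw [pd_sum3 a x _ (fun b c k =>
      (((hA b k).fun_mul (hB k c)).const_mul (eps a b c)).differentiableAt)]
    refine Finset.sum_congr rfl fun b _ => Finset.sum_congr rfl fun c _ =>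
      Finset.sum_congr rfl fun k _ => ?_
    exact pd_cmul_mul a x (eps a b c) _ _ ((hA b k).differentiableAt) ((hB k c).differentiableAt)
  rw [hL]
  have := key (A x) (B x) (fun c => fun i j => pd c (fun y => A y i j) x)
      (fun c => fun i j => pd c (fun y => B y i j) x)
      (fun i j => hAsym' i j x) (fun i j => hBsym' i j x)
      (fun c i j => pd_congr c x (fun y => hAsym' i j y))
      (fun c i j => pd_congr c x (fun y => hBsym' i j y))
  exact this
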